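/- (Guarantee of the modified-profit greedy sequence, part 1.) Consider an SSFS instance with intersection bonus, finite feasible family F (with ∅ ∈ F), nonnegative profits, and T ≥ 2 time steps. Let (S_1,…,S_T) be any sequence with: S_1 maximizing p_1(S) + |S| over S ∈ F; for 2 ≤ t ≤ T−1, S_t maximizing p_t(S) + |S ∩ S_{t−1}| + |S| over S ∈ F; and S_T maximizing p_T(S) + |S ∩ S_{T−1}| over S ∈ F. Then f(S_1,…,S_T) + Σ_{t=1}^{T−1} |S_t| ≥ OPT. -/

import Mathlib

/-- The value of a solution sequence under the intersection bonus: total profit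
plus, for each pair of consecutive steps, the size of the intersection of the two
solutions. -/
noncomputable def intVal (n T : ℕ) (p : ℕ → Finset (Fin n) → ℝ)
    (S : ℕ → Finset (Fin n)) : ℝ :=
  (∑ t ∈ Finset.range T, p t (S t)) +
    ∑ t ∈ Finset.range (T - 1), ((S t ∩ S (t + 1)).card : ℝ)

/-- A valid multistage instance: the empty set is feasible at every time step and
profits are nonnegative. -/
def ValidInstance (n T : ℕ) (F : ℕ → Set (Finset (Fin n)))
    (p : ℕ → Finset (Fin n) → ℝ) : Prop :=
  (∀ t, t < T → (∅ : Finset (Fin n)) ∈ F t) ∧ ∀ t, t < T → ∀ S, 0 ≤ p t S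

/-- A solution sequence: feasible at every time step. -/
def IsSol (n T : ℕ) (F : ℕ → Set (Finset (Fin n))) (S : ℕ → Finset (Fin n)) : Prop :=
  ∀ t, t < T → S t ∈ F t

/-- A deterministic online algorithm: the solution output at time `t < T` depends
only on the data `(F_s, p_s)` revealed up to time `s ≤ t`. -/
def IsOnline (n T : ℕ)
    (alg : (ℕ → Set (Finset (Fin n))) → (ℕ → Finset (Fin n) → ℝ) → ℕ → Finset (Fin n)) :
    Prop :=
  ∀ F p F' p', ∀ t, t < T →
    (∀ s, s ≤ t → F s = F' s ∧ p s = p' s) → alg F p t = alg F' p' t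

/-- The sequences produced by the modified-profit greedy algorithm `MP-Algo`
(time steps are indexed `0, …, T-1`): `S 0` maximizes `p 0 S' + |S'|`; for
`1 ≤ t ≤ T-2`, `S t` maximizes `p t S' + |S' ∩ S (t-1)| + |S'|`; and `S (T-1)`
maximizes `p (T-1) S' + |S' ∩ S (T-2)|`, each over feasible `S'`. -/
def MPGreedy (n T : ℕ) (Feas : Set (Finset (Fin n))) (p : ℕ → Finset (Fin n) → ℝ)
    (S : ℕ → Finset (Fin n)) : Prop :=
  (S 0 ∈ Feas ∧ ∀ S' ∈ Feas,
      p 0 S' + (S'.card : ℝ) ≤ p 0 (S 0) + ((S 0).card : ℝ)) ∧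
  (∀ t, 1 ≤ t → t < T - 1 → S t ∈ Feas ∧ ∀ S' ∈ Feas,
      p t S' + ((S' ∩ S (t - 1)).card : ℝ) + (S'.card : ℝ) ≤
        p t (S t) + ((S t ∩ S (t - 1)).card : ℝ) + ((S t).card : ℝ)) ∧
  (S (T - 1) ∈ Feas ∧ ∀ S' ∈ Feas,
      p (T - 1) S' + ((S' ∩ S (T - 2)).card : ℝ) ≤
        p (T - 1) (S (T - 1)) + ((S (T - 1) ∩ S (T - 2)).card : ℝ))

/-- Guarantee of the modified-profit greedy sequence, part 1: for an SSFS instance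
with intersection bonus (empty set feasible, nonnegative profits, `T ≥ 2` time
steps), any sequence `S` satisfying the `MP-Algo` maximization conditions satisfies
`f(S) + ∑_{t=0}^{T-2} |S t| ≥ OPT`. -/
theorem stmt14 (n T : ℕ) (hT : 2 ≤ T)
    (Feas : Set (Finset (Fin n))) (hempty : (∅ : Finset (Fin n)) ∈ Feas)
    (p : ℕ → Finset (Fin n) → ℝ) (hp : ∀ t, t < T → ∀ S, 0 ≤ p t S)
    (S : ℕ → Finset (Fin n)) (hS : MPGreedy n T Feas p S) :
    ∀ Shat : ℕ → Finset (Fin n), IsSol n T (fun _ => Feas) Shat →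
      intVal n T p Shat ≤
        intVal n T p S + ∑ t ∈ Finset.range (T - 1), ((S t).card : ℝ) := by
  intro Shat hShat
  obtain ⟨⟨hS0F, hS0⟩, hmid, ⟨hSTF, hST⟩⟩ := hS
  set q : ℕ → Finset (Fin n) → ℝ := fun t X =>
    p t X + (if t = 0 then 0 else ((X ∩ S (t - 1)).card : ℝ))
      + (if t = T - 1 then 0 else (X.card : ℝ)) with hq
  have key : ∀ t < T, q t (Shat t) ≤ q t (S t) := by
    intro t ht
    by_cases h0 : t = 0
    · subst h0
      have hne : (0 : ℕ) ≠ T - 1 := by omega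
      simp only [hq, eq_self_iff_true, if_true, if_neg hne]
      have := hS0 (Shat 0) (hShat 0 (by omega))
      linarith
    · by_cases hlast : t = T - 1
      · subst hlast
        have h2 : T - 1 - 1 = T - 2 := by omega
        simp only [hq, if_neg h0, eq_self_iff_true, if_true, h2, add_zero]
        have := hST (Shat (T - 1)) (hShat (T - 1) (by omega))
        linarith
      · obtain ⟨_, hmax⟩ := hmid t (by omega) (by omega)
        simp only [hq, if_neg h0, if_neg hlast]
        have := hmax (Shat t) (hShat t ht)
        linarith
  have sumkey : ∑ t ∈ Finset.range T, q t (Shat t) ≤ ∑ t ∈ Finset.range T, q t (S t) :=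
    Finset.sum_le_sum (fun t ht => key t (Finset.mem_range.mp ht))
  have hTsucc : T = (T - 1) + 1 := by omega
  have expand : ∀ X : ℕ → Finset (Fin n),
      ∑ t ∈ Finset.range T, q t (X t) =
      (∑ t ∈ Finset.range T, p t (X t)) +
      (∑ t ∈ Finset.range (T - 1), ((X (t + 1) ∩ S t).card : ℝ)) +
      (∑ t ∈ Finset.range (T - 1), ((X t).card : ℝ)) := by
    intro X
    have h1 : ∑ t ∈ Finset.range T, q t (X t) =
        (∑ t ∈ Finset.range T, p t (X t)) +
        (∑ t ∈ Finset.range T, (if t = 0 then 0 else ((X t ∩ S (t - 1)).card : ℝ))) +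
        (∑ t ∈ Finset.range T, (if t = T - 1 then 0 else ((X t).card : ℝ))) := by
      simp [hq, Finset.sum_add_distrib]
    rw [h1]
    have e2 : (∑ t ∈ Finset.range T, if t = 0 then (0:ℝ) else ((X t ∩ S (t - 1)).card : ℝ)) =
        ∑ t ∈ Finset.range (T - 1), ((X (t + 1) ∩ S t).card : ℝ) := by
      have h := Finset.sum_range_succ'
        (fun t => if t = 0 then (0:ℝ) else ((X t ∩ S (t - 1)).card : ℝ)) (T - 1)
      rw [← hTsucc] at h
      rw [h]; simp
    have e3 : (∑ t ∈ Finset.range T, if t = T - 1 then (0:ℝ) else ((X t).card : ℝ)) =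
        ∑ t ∈ Finset.range (T - 1), ((X t).card : ℝ) := by
      have h := Finset.sum_range_succ
        (fun t => if t = T - 1 then (0:ℝ) else ((X t).card : ℝ)) (T - 1)
      rw [← hTsucc] at h
      rw [h, if_pos rfl, add_zero]
      apply Finset.sum_congr rfl
      intro t ht
      rw [if_neg (by have := Finset.mem_range.mp ht; omega)]
    rw [e2, e3]
  have hlhs : intVal n T p Shat ≤ ∑ t ∈ Finset.range T, q t (Shat t) := by
    rw [expand, intVal]
    have b1 : ∑ t ∈ Finset.range (T - 1), ((Shat t ∩ Shat (t + 1)).card : ℝ) ≤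
        ∑ t ∈ Finset.range (T - 1), ((Shat t).card : ℝ) := by
      apply Finset.sum_le_sum
      intro t _
      exact_mod_cast Finset.card_le_card (Finset.inter_subset_left)
    have b2 : (0 : ℝ) ≤ ∑ t ∈ Finset.range (T - 1), ((Shat (t + 1) ∩ S t).card : ℝ) :=
      Finset.sum_nonneg (fun t _ => Nat.cast_nonneg _)
    linarith
  have hrhs : ∑ t ∈ Finset.range T, q t (S t) =
      intVal n T p S + ∑ t ∈ Finset.range (T - 1), ((S t).card : ℝ) := by
    rw [expand, intVal]
    have : ∀ t, ((S (t + 1) ∩ S t).card : ℝ) = ((S t ∩ S (t + 1)).card : ℝ) := by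
      intro t; rw [Finset.inter_comm]
    simp only [this]
  linarith
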